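/- Let M = [m], let (k, P⃗, p⃗) be a partition parameter (P⃗ = (P_1,...,P_k) a partition of M into k sets and 0 ≤ p_i ≤ |P_i| for all i), and let S ⊆ M. Let PC be the uniform distribution over all U ⊆ M with |U ∩ P_i| = p_i for all i, and let PCally be the product distribution where each z ∈ M belongs to U independently with probability p_{j(z)}/|P_{j(z)}|, where j(z) is the index with z ∈ P_{j(z)}. Then Pr_{U ~ PC}(U ∩ S = ∅) ≤ Pr_{U ~ PCally}(U ∩ S = ∅). -/

import Mathlib

open Finset

section aux

lemma choose_step' (p mm n : ℕ) (hpm : p < mm) (hmn : mm ≤ n) :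
    ((mm - 1).choose p : ℝ) ≤ (1 - (p:ℝ)/n) * (mm.choose p) := by
  obtain ⟨t, rfl⟩ : ∃ t, mm = t + 1 := ⟨mm - 1, by omega⟩
  have hid : (t+1) * t.choose p = (t+1).choose p * (t+1-p) := by
    rw [← Nat.choose_succ_right_eq, Nat.add_one_mul_choose_eq]
  have hn : (0:ℝ) < n := by
    have : 0 < n := by omega
    exact_mod_cast this
  have hidR : ((t:ℝ)+1) * t.choose p = ((t+1).choose p : ℝ) * ((t:ℝ)+1-p) := by
    have := congrArg (fun x : ℕ => (x : ℝ)) hid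
    push_cast [Nat.cast_sub (by omega : p ≤ t+1)] at this
    linarith [this]
  simp only [Nat.add_sub_cancel]
  have ht1 : (0:ℝ) < (t:ℝ)+1 := by positivity
  rw [← mul_le_mul_iff_right₀ ht1]
  have hmnR : ((t:ℝ)+1) ≤ n := by exact_mod_cast hmn
  have hch : (0:ℝ) ≤ ((t+1).choose p : ℝ) := by positivity
  have hp0 : (0:ℝ) ≤ (p:ℝ) := by positivity
  calc ((t:ℝ)+1) * (t.choose p) = ((t+1).choose p : ℝ) * ((t:ℝ)+1-p) := hidR
    _ ≤ ((t:ℝ)+1) * ((1 - (p:ℝ)/n) * ((t+1).choose p)) := by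
        have hrw : ((t:ℝ)+1) * ((1 - (p:ℝ)/n) * ((t+1).choose p))
            = ((t:ℝ)+1) * ((n:ℝ)-p) * ((t+1).choose p) / n := by
          field_simp
        rw [hrw, le_div_iff₀ hn]
        nlinarith [mul_nonneg (mul_nonneg hch hp0) (sub_nonneg.mpr hmnR)]

lemma choose_ratio' (p n : ℕ) (hpn : p ≤ n) (s : ℕ) :
    ((n - s).choose p : ℝ) ≤ (1 - (p:ℝ) / n)^s * (n.choose p) := by
  have h1 : (0:ℝ) ≤ 1 - (p:ℝ)/n := by
    rcases Nat.eq_zero_or_pos n with h | h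
    · have : p = 0 := by omega
      simp [this]
    · have : (p:ℝ)/n ≤ 1 := by
        rw [div_le_one (by exact_mod_cast h)]
        exact_mod_cast hpn
      linarith
  induction s with
  | zero => simp
  | succ s ih =>
    by_cases hc : n - s ≤ p
    · rcases Nat.eq_zero_or_pos p with hp | hp
      · subst hp
        simp
      · have : (n - (s+1)).choose p = 0 := Nat.choose_eq_zero_of_lt (by omega)
        rw [this]
        push_cast
        positivity
    · push_neg at hc
      have step := choose_step' p (n - s) n hc (by omega)
      have heq : n - (s+1) = (n - s) - 1 := by omega
      rw [heq, pow_succ]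
      calc ((n - s - 1).choose p : ℝ) ≤ (1 - (p:ℝ)/n) * ((n-s).choose p) := step
        _ ≤ (1 - (p:ℝ)/n) * ((1 - (p:ℝ)/n)^s * n.choose p) :=
            mul_le_mul_of_nonneg_left ih h1
        _ = (1 - (p:ℝ)/n)^s * (1 - (p:ℝ)/n) * n.choose p := by ring

end aux

/-- Comparison of the uniform conditional distribution `PC` with its product
approximation `PCally`: the probability of avoiding a fixed set `S` is at most the
corresponding product probability. -/
theorem pc_avoid_le_pcally_avoid (m k : ℕ)
    (P : Fin k → Finset (Fin m)) (pvec : Fin k → ℕ)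
    -- `(P_1, …, P_k)` is a partition of `M = [m]`:
    (hdisj : ∀ i j, i ≠ j → Disjoint (P i) (P j))
    (hcover : ∀ z : Fin m, ∃ i, z ∈ P i)
    -- `0 ≤ p_i ≤ |P_i|`:
    (hle : ∀ i, pvec i ≤ (P i).card)
    -- `j z` is the index of the part containing `z`:
    (j : Fin m → Fin k) (hj : ∀ z, z ∈ P (j z))
    (S : Finset (Fin m)) :
    (((Finset.univ.filter
        (fun U : Finset (Fin m) => ∀ i, (U ∩ P i).card = pvec i)).filter
          (fun U => U ∩ S = ∅)).card : ℝ) /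
      ((Finset.univ.filter
        (fun U : Finset (Fin m) => ∀ i, (U ∩ P i).card = pvec i)).card : ℝ)
      ≤ ∏ z ∈ S, (1 - (pvec (j z) : ℝ) / ((P (j z)).card : ℝ)) := by

  classical
  set A := Finset.univ.filter
      (fun U : Finset (Fin m) => ∀ i, (U ∩ P i).card = pvec i) with hA
  set B := A.filter (fun U => U ∩ S = ∅) with hB
  -- part membership is unique
  have huniq : ∀ z i, z ∈ P i → i = j z := by
    intro z i hz
    by_contra hne
    exact Finset.disjoint_left.mp (hdisj i (j z) hne) hz (hj z)
  -- denominator lower bound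
  have hden : (∏ i, (P i).card.choose (pvec i)) ≤ A.card := by
    have := Finset.card_le_card_of_injOn
      (f := fun T : Fin k → Finset (Fin m) => Finset.univ.biUnion T)
      (s := Fintype.piFinset (fun i => (P i).powersetCard (pvec i)))
      (t := A)
      (by
        intro T hT
        rw [Finset.mem_coe, Fintype.mem_piFinset] at hT
        simp only [hA, Finset.mem_coe, mem_filter, mem_univ, true_and]
        intro i
        have hint : Finset.univ.biUnion T ∩ P i = T i := by
          ext z
          simp only [mem_inter, mem_biUnion, mem_univ, true_and]
          constructor
          · rintro ⟨⟨i', hi'⟩, hzP⟩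
            have h1 := Finset.mem_powersetCard.mp (hT i')
            have : z ∈ P i' := h1.1 hi'
            have : i' = j z := huniq z i' this
            have : i = j z := huniq z i hzP
            subst this
            rwa [show i' = j z from huniq z i' (h1.1 hi')] at hi'
          · intro hz
            have h1 := Finset.mem_powersetCard.mp (hT i)
            exact ⟨⟨i, hz⟩, h1.1 hz⟩
        rw [hint]
        exact (Finset.mem_powersetCard.mp (hT i)).2)
      (by
        intro T hT T' hT' hEq
        replace hEq : Finset.univ.biUnion T = Finset.univ.biUnion T' := hEq
        rw [Finset.mem_coe, Fintype.mem_piFinset] at hT hT'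
        funext i
        have key : ∀ (T : Fin k → Finset (Fin m)),
            (∀ i, T i ∈ (P i).powersetCard (pvec i)) →
            Finset.univ.biUnion T ∩ P i = T i := by
          intro T hT
          ext z
          simp only [mem_inter, mem_biUnion, mem_univ, true_and]
          constructor
          · rintro ⟨⟨i', hi'⟩, hzP⟩
            have h1 := Finset.mem_powersetCard.mp (hT i')
            have hii' : i' = j z := huniq z i' (h1.1 hi')
            have hij : i = j z := huniq z i hzP
            rw [hij, ← hii']
            exact hi'
          · intro hz
            have h1 := Finset.mem_powersetCard.mp (hT i)
            exact ⟨⟨i, hz⟩, h1.1 hz⟩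
        rw [← key T hT, ← key T' hT', hEq])
    calc (∏ i, (P i).card.choose (pvec i))
        = (Fintype.piFinset (fun i => (P i).powersetCard (pvec i))).card := by
          rw [Fintype.card_piFinset]
          simp [Finset.card_powersetCard]
      _ ≤ A.card := this
  -- numerator upper bound
  have hnum : B.card ≤ ∏ i, ((P i) \ S).card.choose (pvec i) := by
    have := Finset.card_le_card_of_injOn
      (f := fun U : Finset (Fin m) => fun i => U ∩ P i)
      (s := B)
      (t := Fintype.piFinset (fun i => ((P i) \ S).powersetCard (pvec i)))
      (by
        intro U hU
        rw [hB, Finset.mem_coe, Finset.mem_filter] at hU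
        obtain ⟨hUA, hUS⟩ := hU
        rw [hA, Finset.mem_filter] at hUA
        rw [Finset.mem_coe, Fintype.mem_piFinset]
        intro i
        rw [Finset.mem_powersetCard]
        refine ⟨?_, hUA.2 i⟩
        intro z hz
        rw [mem_inter] at hz
        rw [Finset.mem_sdiff]
        refine ⟨hz.2, ?_⟩
        intro hzS
        have : z ∈ U ∩ S := Finset.mem_inter.mpr ⟨hz.1, hzS⟩
        rw [hUS] at this
        exact absurd this (Finset.notMem_empty z))
      (by
        intro U hU V hV hEq
        replace hEq : (fun i => U ∩ P i) = (fun i => V ∩ P i) := hEq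
        ext z
        constructor
        · intro hz
          have : z ∈ U ∩ P (j z) := Finset.mem_inter.mpr ⟨hz, hj z⟩
          have h2 : z ∈ V ∩ P (j z) := by rw [← congrFun hEq (j z)]; exact this
          exact (Finset.mem_inter.mp h2).1
        · intro hz
          have : z ∈ V ∩ P (j z) := Finset.mem_inter.mpr ⟨hz, hj z⟩
          have h2 : z ∈ U ∩ P (j z) := by rw [congrFun hEq (j z)]; exact this
          exact (Finset.mem_inter.mp h2).1)
    calc B.card ≤ (Fintype.piFinset (fun i => ((P i) \ S).powersetCard (pvec i))).card := this
      _ = ∏ i, ((P i) \ S).card.choose (pvec i) := by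
          rw [Fintype.card_piFinset]
          simp [Finset.card_powersetCard]
  -- positivity of the denominator product
  have hprodpos : (0:ℝ) < ∏ i, ((P i).card.choose (pvec i) : ℝ) := by
    apply Finset.prod_pos
    intro i _
    have : 0 < (P i).card.choose (pvec i) := Nat.choose_pos (hle i)
    exact_mod_cast this
  -- RHS rewrite as a product over parts
  have hSsplit : S = Finset.univ.biUnion (fun i => S ∩ P i) := by
    ext z
    simp only [mem_biUnion, mem_univ, true_and, mem_inter]
    exact ⟨fun hz => ⟨j z, hz, hj z⟩, fun ⟨i, hz, _⟩ => hz⟩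
  have hRHS : (∏ z ∈ S, (1 - (pvec (j z) : ℝ) / ((P (j z)).card : ℝ)))
      = ∏ i, (1 - (pvec i : ℝ) / ((P i).card : ℝ)) ^ (S ∩ P i).card := by
    conv_lhs => rw [hSsplit]
    rw [Finset.prod_biUnion]
    · apply Finset.prod_congr rfl
      intro i _
      rw [Finset.prod_congr rfl (fun z hz => ?_), Finset.prod_const]
      have hzP : z ∈ P i := (Finset.mem_inter.mp hz).2
      rw [← huniq z i hzP]
    · intro a _ b _ hab
      exact Finset.disjoint_left.mpr (fun z hza hzb =>
        Finset.disjoint_left.mp (hdisj a b hab) (Finset.mem_inter.mp hza).2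
          (Finset.mem_inter.mp hzb).2)
  -- each factor nonneg
  have hfac : ∀ i : Fin k, (0:ℝ) ≤ 1 - (pvec i : ℝ) / ((P i).card : ℝ) := by
    intro i
    rcases Nat.eq_zero_or_pos (P i).card with h | h
    · have : pvec i = 0 := by have := hle i; omega
      simp [this]
    · have : (pvec i : ℝ) / (P i).card ≤ 1 := by
        rw [div_le_one (by exact_mod_cast h)]
        exact_mod_cast hle i
      linarith
  -- combine
  have hmain : (B.card : ℝ) / (A.card : ℝ)
      ≤ (∏ i, (((P i) \ S).card.choose (pvec i) : ℝ)) / (∏ i, ((P i).card.choose (pvec i) : ℝ)) := by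
    apply div_le_div₀ (by positivity) ?_ hprodpos ?_
    · exact_mod_cast hnum
    · exact_mod_cast hden
  refine hmain.trans ?_
  rw [hRHS, ← Finset.prod_div_distrib]
  apply Finset.prod_le_prod
  · intro i _
    positivity
  · intro i _
    have hchpos : (0:ℝ) < ((P i).card.choose (pvec i) : ℝ) :=
      Nat.cast_pos.mpr (Nat.choose_pos (hle i))
    rw [div_le_iff₀ hchpos]
    have hcard : ((P i) \ S).card = (P i).card - (S ∩ P i).card := by
      have h := Finset.card_sdiff_add_card_inter (P i) S
      rw [Finset.inter_comm] at h
      omega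
    rw [hcard]
    exact choose_ratio' (pvec i) ((P i).card) (hle i) ((S ∩ P i).card)
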